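/- Let q > 2 be an integer and let δ > 0. Then there exists a finite collection E of pairwise disjoint closed intervals contained in [0, q) ⊂ ℝ, each of length less than δ, partitioned into q disjoint subcollections E = E_1 ∪ ⋯ ∪ E_q, such that for every t ∈ ℝ the set t + ℤ meets at least q − 2 of the subcollections E_i. -/

import Mathlib

set_option maxHeartbeats 1000000

/-- The integer index of the `k`-th interval of the `i`-th family. -/
def Mf (q N i k : ℕ) : ℤ :=
  (q : ℤ) * ((i : ℤ) * N + k - (if k = N - 1 then if 1 ≤ i then (N : ℤ) else 0 else 0)) + i

/-- Bound on the inner quantity `A`. -/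
lemma A_bound (q N i k : ℕ) (hq : 3 ≤ q) (hN : 1 ≤ N) (hi : i < q) (hk : k < N) :
    (i : ℤ) * N + k - (if k = N - 1 then if 1 ≤ i then (N : ℤ) else 0 else 0)
      ≤ (q : ℤ) * N - 2 := by
  have hp : ((i : ℤ) + 1) * N ≤ (q : ℤ) * N := by
    have h1 : ((i : ℤ) + 1) ≤ (q : ℤ) := by exact_mod_cast hi
    have h2 : (0 : ℤ) ≤ (N : ℤ) := by positivity
    exact mul_le_mul_of_nonneg_right h1 h2
  have hN' : (1 : ℤ) ≤ (N : ℤ) := by exact_mod_cast hN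
  have hk' : (k : ℤ) < (N : ℤ) := by exact_mod_cast hk
  have hq' : (3 : ℤ) ≤ (q : ℤ) := by exact_mod_cast hq
  split_ifs with h1 h2
  · -- wrap case
    nlinarith
  · -- k = N - 1, i = 0
    have hi0 : i = 0 := by omega
    subst hi0
    have hkN : (k : ℤ) = (N : ℤ) - 1 := by
      have : (k : ℤ) = ((N - 1 : ℕ) : ℤ) := by exact_mod_cast congrArg (Nat.cast : ℕ → ℤ) h1
      omega
    push_cast
    nlinarith
  · -- k < N - 1
    have hkN : (k : ℤ) ≤ (N : ℤ) - 2 := by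
      have : k ≠ N - 1 := h1
      omega
    nlinarith

lemma Mf_nonneg (q N i k : ℕ) (hN : 1 ≤ N) : 0 ≤ Mf q N i k := by
  unfold Mf
  have hN' : (1 : ℤ) ≤ (N : ℤ) := by exact_mod_cast hN
  have hq' : (0 : ℤ) ≤ (q : ℤ) := by positivity
  have hi' : (0 : ℤ) ≤ (i : ℤ) := by positivity
  have hk' : (0 : ℤ) ≤ (k : ℤ) := by positivity
  split_ifs with h1 h2
  · have : (N : ℤ) ≤ (i : ℤ) * N := by
      have : (1 : ℤ) ≤ (i : ℤ) := by exact_mod_cast h2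
      nlinarith
    have h3 : 0 ≤ (i : ℤ) * N + k - N := by linarith
    positivity
  · have h3 : 0 ≤ (i : ℤ) * N + k - 0 := by nlinarith
    nlinarith
  · have h3 : 0 ≤ (i : ℤ) * N + k - 0 := by nlinarith
    nlinarith

lemma Mf_bound (q N i k : ℕ) (hq : 3 ≤ q) (hN : 1 ≤ N) (hi : i < q) (hk : k < N) :
    Mf q N i k + q + 1 ≤ (q : ℤ) * (q * N) := by
  have hA := A_bound q N i k hq hN hi hk
  have hq' : (3 : ℤ) ≤ (q : ℤ) := by exact_mod_cast hq
  have h2 : (q : ℤ) * ((i : ℤ) * N + k - (if k = N - 1 then if 1 ≤ i then (N : ℤ) else 0 else 0))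
      ≤ (q : ℤ) * ((q : ℤ) * N - 2) := by
    apply mul_le_mul_of_nonneg_left hA (by linarith)
  have hi' : (i : ℤ) < (q : ℤ) := by exact_mod_cast hi
  unfold Mf
  nlinarith

/-- Combinatorial analysis of the inner quantities. -/
lemma A_cases (N i k i' k' : ℕ) (hN : 1 ≤ N) (hk : k < N) (hk' : k' < N) :
    (((i : ℤ) * N + k - (if k = N - 1 then if 1 ≤ i then (N : ℤ) else 0 else 0)) =
        ((i' : ℤ) * N + k' - (if k' = N - 1 then if 1 ≤ i' then (N : ℤ) else 0 else 0)) →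
      (i = i' ∧ k = k') ∨ (i = 0 ∧ k = N - 1 ∧ i < i') ∨ (i' = 0 ∧ k' = N - 1 ∧ i' < i)) ∧
    (((i : ℤ) * N + k - (if k = N - 1 then if 1 ≤ i then (N : ℤ) else 0 else 0)) + 1 =
        ((i' : ℤ) * N + k' - (if k' = N - 1 then if 1 ≤ i' then (N : ℤ) else 0 else 0)) → i ≤ i') := by
  have hN' : (1 : ℤ) ≤ (N : ℤ) := by exact_mod_cast hN
  have hkz : (k : ℤ) < (N : ℤ) := by exact_mod_cast hk
  have hkz' : (k' : ℤ) < (N : ℤ) := by exact_mod_cast hk'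
  rcases Nat.lt_trichotomy i i' with hii | hii | hii
  · have hp : (i : ℤ) * N + N ≤ (i' : ℤ) * N := by
      have h1 : ((i : ℤ) + 1) ≤ (i' : ℤ) := by exact_mod_cast hii
      nlinarith
    constructor <;> intro h <;> split_ifs at h <;>
      first
        | omega
        | (exfalso; omega)
        | (right; left;
           refine ⟨by omega, by omega, hii⟩)
        | (left; omega)
  · subst hii
    constructor <;> intro h <;> split_ifs at h <;> omega
  · have hp : (i' : ℤ) * N + N ≤ (i : ℤ) * N := by
      have h1 : ((i' : ℤ) + 1) ≤ (i : ℤ) := by exact_mod_cast hii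
      nlinarith
    constructor <;> intro h <;> split_ifs at h <;>
      first
        | omega
        | (exfalso; omega)
        | (right; right;
           refine ⟨by omega, by omega, hii⟩)
        | (left; omega)

/-- Key separation lemma. -/
lemma Mf_sep (q N i k i' k' : ℕ) (hq : 3 ≤ q) (hN : 1 ≤ N)
    (hi : i < q) (hi' : i' < q) (hk : k < N) (hk' : k' < N)
    (hne : ¬(i = i' ∧ k = k')) (hle : Mf q N i k ≤ Mf q N i' k') :
    (i = 0 ∧ k = N - 1 ∧ Mf q N i k < Mf q N i' k') ∨ Mf q N i k + q ≤ Mf q N i' k' := by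
  have hA2 := A_cases N i k i' k' hN hk hk'
  have hq' : (3 : ℤ) ≤ (q : ℤ) := by exact_mod_cast hq
  have hiz : (i : ℤ) < (q : ℤ) := by exact_mod_cast hi
  have hiz' : (i' : ℤ) < (q : ℤ) := by exact_mod_cast hi'
  have hi0 : (0 : ℤ) ≤ (i : ℤ) := by positivity
  have hi0' : (0 : ℤ) ≤ (i' : ℤ) := by positivity
  unfold Mf at hle ⊢
  set A := (i : ℤ) * N + k - (if k = N - 1 then if 1 ≤ i then (N : ℤ) else 0 else 0) with hA
  set A' := (i' : ℤ) * N + k' - (if k' = N - 1 then if 1 ≤ i' then (N : ℤ) else 0 else 0) with hA'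
  have hAle : A ≤ A' := by
    by_contra hcon
    push_neg at hcon
    have h1 : A' + 1 ≤ A := by omega
    have h2 : (q : ℤ) * (A' + 1) ≤ (q : ℤ) * A :=
      mul_le_mul_of_nonneg_left h1 (by linarith)
    nlinarith
  rcases lt_or_ge A' (A + 2) with hc | hc
  · rcases (by omega : A' = A ∨ A' = A + 1) with h | h
    · have hqA : (q : ℤ) * A' = (q : ℤ) * A := by rw [h]
      rcases hA2.1 h.symm with ⟨he1, he2⟩ | ⟨h0, hk1, hii⟩ | ⟨h0, hk1, hii⟩
      · exact absurd ⟨he1, he2⟩ hne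
      · left
        refine ⟨h0, hk1, ?_⟩
        have : (i : ℤ) < (i' : ℤ) := by exact_mod_cast hii
        omega
      · exfalso
        have : (i' : ℤ) < (i : ℤ) := by exact_mod_cast hii
        omega
    · have hii := hA2.2 h.symm
      have hiiz : (i : ℤ) ≤ (i' : ℤ) := by exact_mod_cast hii
      have h3 : (q : ℤ) * A' = (q : ℤ) * A + q := by rw [h]; ring
      right; omega
  · have h2 : (q : ℤ) * (A + 2) ≤ (q : ℤ) * A' :=
      mul_le_mul_of_nonneg_left hc (by linarith)
    have h3 : (q : ℤ) * (A + 2) = (q : ℤ) * A + 2 * q := by ring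
    right; omega


lemma gap_unique (q k k' i i' : ℕ) (hi : i < q) (hi' : i' < q) (c x : ℝ) (hc : 0 < c)
    (h1 : ((2 * (k * q + i) : ℕ) : ℝ) * c < x) (h2 : x < ((2 * (k * q + i) + 1 : ℕ) : ℝ) * c)
    (h1' : ((2 * (k' * q + i') : ℕ) : ℝ) * c < x) (h2' : x < ((2 * (k' * q + i') + 1 : ℕ) : ℝ) * c) :
    i = i' := by
  have e1 : ((2 * (k * q + i) : ℕ) : ℝ) * c < ((2 * (k' * q + i') + 1 : ℕ) : ℝ) * c := lt_trans h1 h2'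
  have e2 : ((2 * (k' * q + i') : ℕ) : ℝ) * c < ((2 * (k * q + i) + 1 : ℕ) : ℝ) * c := lt_trans h1' h2
  have f1 : (2 * (k * q + i) : ℕ) < 2 * (k' * q + i') + 1 := by
    have := (mul_lt_mul_iff_left₀ hc).mp e1
    exact_mod_cast this
  have f2 : (2 * (k' * q + i') : ℕ) < 2 * (k * q + i) + 1 := by
    have := (mul_lt_mul_iff_left₀ hc).mp e2
    exact_mod_cast this
  have f3 : k * q + i = k' * q + i' := by omega
  have f3' : i + k * q = i' + k' * q := by omega
  have f4 : i % q = i' % q := by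
    rw [← Nat.add_mul_mod_self_right i k q, ← Nat.add_mul_mod_self_right i' k' q, f3']
  rwa [Nat.mod_eq_of_lt hi, Nat.mod_eq_of_lt hi'] at f4

lemma Mf_wrap (q N i : ℕ) (hi1 : 1 ≤ i) (hN : 1 ≤ N) :
    Mf q N i (N - 1) = (q : ℤ) * ((i : ℤ) * N + (N - 1) - N) + i := by
  unfold Mf
  rw [if_pos rfl, if_pos hi1]
  have : ((N - 1 : ℕ) : ℤ) = (N : ℤ) - 1 := by
    have := Nat.cast_sub hN (R := ℤ)
    simpa using this
  rw [this]

lemma Mf_nowrap (q N i k : ℕ) (hk : k ≠ N - 1) :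
    Mf q N i k = (q : ℤ) * ((i : ℤ) * N + k) + i := by
  unfold Mf
  rw [if_neg hk]
  ring

/-- The hitting lemma: a family `i ≥ 1` is hit unless `x` lies in one of its gaps. -/
lemma hitting (q N : ℕ) (hq : 3 ≤ q) (hN : 1 ≤ N) (i : ℕ) (hi1 : 1 ≤ i) (hiq : i < q)
    (x : ℝ) (hx0 : 0 ≤ x) (hx1 : x < 1)
    (hbad : ∀ k, k < N → ¬(((2 * (k * q + i) : ℕ) : ℝ) * (1 / (2 * q * N)) < x ∧
        x < ((2 * (k * q + i) + 1 : ℕ) : ℝ) * (1 / (2 * q * N)))) :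
    ∃ k < N, ∃ m : ℤ,
      ((2 * Mf q N i k + 1 : ℤ) : ℝ) * (1 / (2 * q * N)) ≤ x + m ∧
      x + m ≤ ((2 * Mf q N i k + 2 * q : ℤ) : ℝ) * (1 / (2 * q * N)) := by
  set c : ℝ := 1 / (2 * q * N) with hcdef
  have hq0 : (0 : ℝ) < q := by positivity
  have hN0 : (0 : ℝ) < N := by exact_mod_cast Nat.lt_of_lt_of_le Nat.zero_lt_one hN
  have hc : 0 < c := by rw [hcdef]; positivity
  have hone : 2 * (q : ℝ) * N * c = 1 := by
    rw [hcdef]; field_simp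
  have hiq' : (i : ℝ) + 1 ≤ (q : ℝ) := by exact_mod_cast hiq
  have hi1' : (1 : ℝ) ≤ (i : ℝ) := by exact_mod_cast hi1
  rcases le_or_gt x (2 * i * c) with hcase | hcase
  · -- use the wrap interval k = N-1, m = i
    refine ⟨N - 1, by omega, (i : ℤ), ?_, ?_⟩
    · rw [Mf_wrap q N i hi1 hN]
      push_cast
      nlinarith
    · rw [Mf_wrap q N i hi1 hN]
      push_cast
      nlinarith
  · -- x > 2ic
    set y : ℝ := x - 2 * i * c with hy
    have hy0 : 0 < y := by rw [hy]; linarith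
    set k₀ : ℕ := (⌊y / (2 * q * c)⌋).toNat with hk₀def
    have h2qc : 0 < 2 * (q : ℝ) * c := by positivity
    have hfl : (⌊y / (2 * q * c)⌋ : ℝ) ≤ y / (2 * q * c) := Int.floor_le _
    have hfl2 : y / (2 * q * c) < (⌊y / (2 * q * c)⌋ : ℝ) + 1 := Int.lt_floor_add_one _
    have hflnn : 0 ≤ ⌊y / (2 * q * c)⌋ := by
      apply Int.floor_nonneg.mpr
      positivity
    have h0 : ((⌊y / (2 * q * c)⌋).toNat : ℤ) = ⌊y / (2 * q * c)⌋ := Int.toNat_of_nonneg hflnn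
    have hk₀cast : ((k₀ : ℕ) : ℝ) = ((⌊y / (2 * q * c)⌋ : ℤ) : ℝ) := by
      rw [hk₀def]
      exact_mod_cast congrArg (Int.cast : ℤ → ℝ) h0
    have hk₀le : (k₀ : ℝ) * (2 * q * c) ≤ y := by
      have h1 : (k₀ : ℝ) ≤ y / (2 * q * c) := by rw [hk₀cast]; exact hfl
      calc (k₀ : ℝ) * (2 * q * c) ≤ (y / (2 * q * c)) * (2 * q * c) :=
            mul_le_mul_of_nonneg_right h1 h2qc.le
        _ = y := by field_simp
    have hk₀lt : y < ((k₀ : ℝ) + 1) * (2 * q * c) := by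
      have h1 : y / (2 * q * c) < (k₀ : ℝ) + 1 := by rw [hk₀cast]; exact hfl2
      calc y = (y / (2 * q * c)) * (2 * q * c) := by field_simp
        _ < ((k₀ : ℝ) + 1) * (2 * q * c) := mul_lt_mul_of_pos_right h1 h2qc
    have hyx : y < 1 := by rw [hy]; nlinarith
    have hk₀N : k₀ < N := by
      by_contra hcon
      push_neg at hcon
      have hNk : (N : ℝ) ≤ (k₀ : ℝ) := by exact_mod_cast hcon
      have : (N : ℝ) * (2 * q * c) ≤ (k₀ : ℝ) * (2 * q * c) :=
        mul_le_mul_of_nonneg_right hNk h2qc.le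
      nlinarith
    have hv : ((2 * (k₀ * q + i) : ℕ) : ℝ) * c = (k₀ : ℝ) * (2 * q * c) + 2 * i * c := by
      push_cast; ring
    have hv1 : ((2 * (k₀ * q + i) + 1 : ℕ) : ℝ) * c
        = (k₀ : ℝ) * (2 * q * c) + 2 * i * c + c := by
      push_cast; ring
    rcases (not_and_or.mp (hbad k₀ hk₀N)) with hb | hb
    · -- x ≤ v, so x = v; use interval k₀ - 1
      push_neg at hb
      rw [hv] at hb
      have hxv : x = (k₀ : ℝ) * (2 * q * c) + 2 * i * c := by
        have h2 : (k₀ : ℝ) * (2 * q * c) + 2 * i * c ≤ x := by rw [hy] at hk₀le; linarith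
        linarith
      have hk₀1 : 1 ≤ k₀ := by
        rcases Nat.eq_zero_or_pos k₀ with hz | hz
        · exfalso
          rw [hz] at hxv
          norm_num at hxv
          linarith
        · exact hz
      refine ⟨k₀ - 1, by omega, (i : ℤ), ?_, ?_⟩ <;>
      · have hkne : k₀ - 1 ≠ N - 1 := by omega
        rw [Mf_nowrap q N i _ hkne]
        have hkc : ((k₀ - 1 : ℕ) : ℝ) = (k₀ : ℝ) - 1 := by
          have := Nat.cast_sub hk₀1 (R := ℝ); simpa using this
        push_cast [hkc]
        nlinarith
    · -- x ≥ v + c; use interval k₀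
      push_neg at hb
      rw [hv1] at hb
      have hlow : (k₀ : ℝ) * (2 * q * c) + 2 * i * c + c ≤ x := hb
      have hhigh : x < (k₀ : ℝ) * (2 * q * c) + 2 * i * c + 2 * q * c := by
        rw [hy] at hk₀lt; nlinarith
      by_cases hkN : k₀ = N - 1
      · refine ⟨k₀, hk₀N, (i : ℤ) - 1, ?_, ?_⟩ <;>
        · rw [hkN, Mf_wrap q N i hi1 hN]
          have hNc : (k₀ : ℝ) = (N : ℝ) - 1 := by
            rw [hkN]; have := Nat.cast_sub hN (R := ℝ); simpa using this
          rw [hNc] at hlow hhigh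
          push_cast
          nlinarith
      · refine ⟨k₀, hk₀N, (i : ℤ), ?_, ?_⟩ <;>
        · rw [Mf_nowrap q N i _ hkN]
          push_cast
          nlinarith

theorem stmt_3 (q : ℕ) (hq : 2 < q) (δ : ℝ) (hδ : 0 < δ) :
    -- E_1, …, E_q are finite collections of closed intervals, each interval
    -- recorded by its pair of endpoints
    ∃ E : Fin q → Finset (ℝ × ℝ),
      -- each interval is nondegenerate, contained in [0, q), of length < δ
      (∀ i, ∀ p ∈ E i, p.1 ≤ p.2 ∧ Set.Icc p.1 p.2 ⊆ Set.Ico (0 : ℝ) q ∧ p.2 - p.1 < δ) ∧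
      -- the intervals of the whole collection E = E_1 ∪ ⋯ ∪ E_q are pairwise
      -- disjoint (in particular the subcollections are disjoint)
      (∀ i i' : Fin q, ∀ p ∈ E i, ∀ p' ∈ E i', (i, p) ≠ (i', p') →
        Disjoint (Set.Icc p.1 p.2) (Set.Icc p'.1 p'.2)) ∧
      -- for every t ∈ ℝ the set t + ℤ meets at least q − 2 of the subcollections
      (∀ t : ℝ,
        q - 2 ≤ Set.ncard {i : Fin q | ∃ p ∈ E i, ∃ z : ℤ, t + z ∈ Set.Icc p.1 p.2}) := by
  have hq3 : 3 ≤ q := hq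
  set N : ℕ := ⌈1 / δ⌉₊ + 1 with hNdef
  have hN : 1 ≤ N := by omega
  have hN0 : (0 : ℝ) < N := by exact_mod_cast Nat.lt_of_lt_of_le Nat.zero_lt_one hN
  have hq0 : (0 : ℝ) < q := by exact_mod_cast Nat.lt_of_lt_of_le Nat.zero_lt_one (by omega)
  have hNδ : (1 : ℝ) / N < δ := by
    rw [div_lt_iff₀ hN0]
    have h1 : (1 : ℝ) / δ ≤ (⌈1 / δ⌉₊ : ℝ) := Nat.le_ceil _
    have h2 : ((⌈1 / δ⌉₊ : ℝ)) + 1 ≤ (N : ℝ) := by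
      rw [hNdef]; push_cast; linarith
    have h3 : (1 : ℝ) / δ * δ = 1 := by field_simp
    nlinarith
  set c : ℝ := 1 / (2 * (q : ℝ) * (N : ℝ)) with hcdef
  have hc : 0 < c := by rw [hcdef]; positivity
  have hone : 2 * (q : ℝ) * N * c = 1 := by rw [hcdef]; field_simp
  refine ⟨fun i => (Finset.range N).image fun k =>
    (((2 * Mf q N i.val k + 1 : ℤ) : ℝ) * c,
     ((2 * Mf q N i.val k + (if i.val = 0 ∧ k = N - 1 then 2 else 2 * q) : ℤ) : ℝ) * c),
    ?_, ?_, ?_⟩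
  · -- basic properties of each interval
    intro i p hp
    rw [Finset.mem_image] at hp
    obtain ⟨k, hkr, rfl⟩ := hp
    have hk : k < N := Finset.mem_range.mp hkr
    have hM0 : 0 ≤ Mf q N i.val k := Mf_nonneg q N i.val k hN
    have hMb := Mf_bound q N i.val k hq3 hN i.isLt hk
    have hM0' : (0 : ℝ) ≤ ((Mf q N i.val k : ℤ) : ℝ) := by exact_mod_cast hM0
    have hMb' : ((Mf q N i.val k : ℤ) : ℝ) + q + 1 ≤ (q : ℝ) * ((q : ℝ) * N) := by
      exact_mod_cast hMb
    have he : (2 : ℤ) ≤ (if i.val = 0 ∧ k = N - 1 then (2 : ℤ) else 2 * q) ∧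
        (if i.val = 0 ∧ k = N - 1 then (2 : ℤ) else 2 * q) ≤ 2 * q := by
      split_ifs <;> constructor <;> omega
    have he1 : (2 : ℝ) ≤ ((if i.val = 0 ∧ k = N - 1 then (2 : ℤ) else 2 * q : ℤ) : ℝ) := by
      exact_mod_cast he.1
    have he2 : ((if i.val = 0 ∧ k = N - 1 then (2 : ℤ) else 2 * q : ℤ) : ℝ) ≤ 2 * q := by
      exact_mod_cast he.2
    push_cast at he1 he2
    refine ⟨?_, ?_, ?_⟩
    · simp only
      apply mul_le_mul_of_nonneg_right _ hc.le
      push_cast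
      linarith
    · simp only
      intro y hy
      obtain ⟨hy1, hy2⟩ := hy
      constructor
      · have : (0 : ℝ) ≤ ((2 * Mf q N i.val k + 1 : ℤ) : ℝ) * c := by
          apply mul_nonneg _ hc.le
          push_cast
          linarith
        linarith
      · have hup : ((2 * Mf q N i.val k + (if i.val = 0 ∧ k = N - 1 then 2 else 2 * q) : ℤ) : ℝ) * c
            < q := by
          have h4 : ((2 * Mf q N i.val k + (if i.val = 0 ∧ k = N - 1 then 2 else 2 * q) : ℤ) : ℝ)
              ≤ 2 * ((Mf q N i.val k : ℤ) : ℝ) + 2 * q := by push_cast; linarith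
          nlinarith
        linarith
    · simp only
      have hlen : ((2 * Mf q N i.val k + (if i.val = 0 ∧ k = N - 1 then 2 else 2 * q) : ℤ) : ℝ) * c
          - ((2 * Mf q N i.val k + 1 : ℤ) : ℝ) * c ≤ (2 * q - 1) * c := by
        have : ((2 * Mf q N i.val k + (if i.val = 0 ∧ k = N - 1 then 2 else 2 * q) : ℤ) : ℝ)
            - ((2 * Mf q N i.val k + 1 : ℤ) : ℝ) ≤ 2 * q - 1 := by push_cast; linarith
        nlinarith
      have h2qc : 2 * (q : ℝ) * c = 1 / N := by
        rw [hcdef]; field_simp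
      nlinarith
  · -- pairwise disjointness
    intro i i' p hp p' hp' hne
    rw [Finset.mem_image] at hp hp'
    obtain ⟨k, hkr, rfl⟩ := hp
    obtain ⟨k', hkr', rfl⟩ := hp'
    have hk : k < N := Finset.mem_range.mp hkr
    have hk' : k' < N := Finset.mem_range.mp hkr'
    by_cases heq : i = i' ∧ k = k'
    · exfalso
      obtain ⟨h1, h2⟩ := heq
      subst h1; subst h2
      exact hne rfl
    have main : ∀ (a b : Fin q) (ka kb : ℕ), ka < N → kb < N →
        ¬(a.val = b.val ∧ ka = kb) → Mf q N a.val ka ≤ Mf q N b.val kb →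
        ((2 * Mf q N a.val ka + (if a.val = 0 ∧ ka = N - 1 then 2 else 2 * q) : ℤ) : ℝ) * c
          < ((2 * Mf q N b.val kb + 1 : ℤ) : ℝ) * c := by
      intro a b ka kb hka hkb hnab hleab
      apply mul_lt_mul_of_pos_right _ hc
      rcases Mf_sep q N a.val ka b.val kb hq3 hN a.isLt b.isLt hka hkb hnab hleab with
        ⟨h0, hk1, hlt⟩ | hsep
      · rw [if_pos ⟨h0, hk1⟩]
        exact_mod_cast (by omega : (2 * Mf q N a.val ka + 2 : ℤ) < 2 * Mf q N b.val kb + 1)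
      · have hcoef : (if a.val = 0 ∧ ka = N - 1 then (2 : ℤ) else 2 * q) ≤ 2 * q := by
          split_ifs <;> omega
        exact_mod_cast (by omega : (2 * Mf q N a.val ka +
          (if a.val = 0 ∧ ka = N - 1 then (2 : ℤ) else 2 * q) : ℤ) < 2 * Mf q N b.val kb + 1)
    have hnat : ¬(i.val = i'.val ∧ k = k') := by
      intro hcon
      exact heq ⟨Fin.ext hcon.1, hcon.2⟩
    have hnat' : ¬(i'.val = i.val ∧ k' = k) := by
      intro hcon
      exact heq ⟨(Fin.ext hcon.1).symm, hcon.2.symm⟩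
    rcases le_total (Mf q N i.val k) (Mf q N i'.val k') with hle | hle
    · have := main i i' k k' hk hk' hnat hle
      rw [Set.disjoint_left]
      rintro y ⟨_, hy2⟩ ⟨hy3, _⟩
      simp only at *
      linarith
    · have := main i' i k' k hk' hk hnat' hle
      rw [Set.disjoint_left]
      rintro y ⟨hy1, _⟩ ⟨_, hy4⟩
      simp only at *
      linarith
  · -- coverage
    intro t
    set x : ℝ := Int.fract t with hxdef
    have hx0 : 0 ≤ x := Int.fract_nonneg t
    have hx1 : x < 1 := Int.fract_lt_one t
    set Bad : ℕ → Prop := fun j => ∃ k, k < N ∧ ((2 * (k * q + j) : ℕ) : ℝ) * c < x ∧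
        x < ((2 * (k * q + j) + 1 : ℕ) : ℝ) * c with hBaddef
    have z0 : Fin q := ⟨0, by omega⟩
    set i₀ : Fin q := if h : ∃ j : Fin q, Bad j.val then h.choose else ⟨0, by omega⟩ with hi₀def
    have hhit : ∀ i : Fin q, i ≠ ⟨0, by omega⟩ → i ≠ i₀ →
        ∃ p ∈ (Finset.range N).image (fun k =>
          (((2 * Mf q N i.val k + 1 : ℤ) : ℝ) * c,
           ((2 * Mf q N i.val k + (if i.val = 0 ∧ k = N - 1 then 2 else 2 * q) : ℤ) : ℝ) * c)),
          ∃ z : ℤ, t + z ∈ Set.Icc p.1 p.2 := by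
      intro i h1 h2
      have hi1 : 1 ≤ i.val := by
        rcases Nat.eq_zero_or_pos i.val with h | h
        · exact absurd (Fin.ext h) h1
        · exact h
      have hnb : ¬ Bad i.val := by
        intro hb
        apply h2
        have hex : ∃ j : Fin q, Bad j.val := ⟨i, hb⟩
        have hi₀ : i₀ = hex.choose := by rw [hi₀def, dif_pos hex]
        have hb₀ : Bad hex.choose.val := hex.choose_spec
        obtain ⟨k, hkN, hg1, hg2⟩ := hb
        obtain ⟨k', hkN', hg1', hg2'⟩ := hb₀
        have := gap_unique q k k' i.val hex.choose.val i.isLt hex.choose.isLt c x hc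
          hg1 hg2 hg1' hg2'
        rw [hi₀]
        exact Fin.ext this
      have hbad : ∀ k, k < N → ¬(((2 * (k * q + i.val) : ℕ) : ℝ) * (1 / (2 * q * N)) < x ∧
          x < ((2 * (k * q + i.val) + 1 : ℕ) : ℝ) * (1 / (2 * q * N))) := by
        intro k hkN hcon
        exact hnb ⟨k, hkN, by rw [hcdef]; exact hcon.1, by rw [hcdef]; exact hcon.2⟩
      obtain ⟨k, hkN, m, hm1, hm2⟩ := hitting q N hq3 hN i.val hi1 i.isLt x hx0 hx1 hbad
      refine ⟨_, Finset.mem_image.mpr ⟨k, Finset.mem_range.mpr hkN, rfl⟩, m - ⌊t⌋, ?_, ?_⟩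
      · simp only
        have ht : t + ((m - ⌊t⌋ : ℤ) : ℝ) = x + m := by
          rw [hxdef, Int.fract]
          push_cast
          ring
        rw [ht]
        rw [hcdef]
        exact hm1
      · simp only
        have ht : t + ((m - ⌊t⌋ : ℤ) : ℝ) = x + m := by
          rw [hxdef, Int.fract]
          push_cast
          ring
        rw [ht]
        have hif : (if i.val = 0 ∧ k = N - 1 then (2 : ℕ) else 2 * q) = 2 * q := by
          rw [if_neg]
          intro hcon
          omega
        rw [hcdef]
        push_cast [hif] at hm2 ⊢
        linarith
    set S : Set (Fin q) := {i : Fin q | ∃ p ∈ (Finset.range N).image (fun k =>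
          (((2 * Mf q N i.val k + 1 : ℤ) : ℝ) * c,
           ((2 * Mf q N i.val k + (if i.val = 0 ∧ k = N - 1 then 2 else 2 * q) : ℤ) : ℝ) * c)),
          ∃ z : ℤ, t + z ∈ Set.Icc p.1 p.2} with hSdef
    have hsub : ↑(Finset.univ \ {(⟨0, by omega⟩ : Fin q), i₀}) ⊆ S := by
      intro i hi
      simp only [Finset.coe_sdiff, Finset.coe_insert, Finset.coe_singleton, Set.mem_diff,
        Set.mem_insert_iff, Finset.coe_univ, Set.mem_univ, true_and] at hi
      push_neg at hi
      exact hhit i hi.1 hi.2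
    have hcard1 : (Finset.univ \ {(⟨0, by omega⟩ : Fin q), i₀}).card ≤ S.ncard := by
      have h := Set.ncard_le_ncard hsub (Set.toFinite S)
      rwa [Set.ncard_coe_finset] at h
    have hcard2 : q - 2 ≤ (Finset.univ \ {(⟨0, by omega⟩ : Fin q), i₀}).card := by
      have h1 : (Finset.univ \ {(⟨0, by omega⟩ : Fin q), i₀}).card
          = Finset.univ.card - ({(⟨0, by omega⟩ : Fin q), i₀} : Finset (Fin q)).card :=
        Finset.card_sdiff_of_subset (Finset.subset_univ _)
      have h2 : ({(⟨0, by omega⟩ : Fin q), i₀} : Finset (Fin q)).card ≤ 2 := by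
        apply le_trans (Finset.card_insert_le _ _)
        simp
      have h3 : (Finset.univ : Finset (Fin q)).card = q := by
        rw [Finset.card_univ, Fintype.card_fin]
      omega
    omega
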